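/- Let h : [0,∞) → ℝ be the function defined by h(x) = H_{⌊x⌋} + (x − ⌊x⌋)/(⌊x⌋ + 1), where H_n = ∑_{k=1}^{n} 1/k is the n-th harmonic number. Then for every integer n ≥ 1 and every real a with 1 ≤ a ≤ n, one has a/n + h(n − a) ≤ h(n), with equality if and only if a = 1. -/

import Mathlib

/-- The piecewise-linear interpolation of the harmonic numbers:
`h x = H_⌊x⌋ + (x − ⌊x⌋)/(⌊x⌋ + 1)`, where `H_n = ∑_{k=1}^n 1/k`. -/
noncomputable def harmonicInterp (x : ℝ) : ℝ :=
  (∑ k ∈ Finset.range ⌊x⌋₊, (1 : ℝ) / (k + 1)) + (x - ⌊x⌋₊) / (⌊x⌋₊ + 1)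

lemma harmonicInterp_nat (m : ℕ) :
    harmonicInterp m = ∑ k ∈ Finset.range m, (1 : ℝ) / (k + 1) := by
  simp [harmonicInterp]

lemma harmonicInterp_key (m : ℕ) : ∀ x : ℝ, 0 ≤ x → x ≤ m →
    harmonicInterp x + ((m : ℝ) - x) / m ≤ harmonicInterp m := by
  induction m with
  | zero =>
    intro x hx hxm
    have : x = 0 := le_antisymm (by simpa using hxm) hx
    subst this
    simp
  | succ m ih =>
    intro x hx hxm
    have hstep : harmonicInterp (m + 1 : ℕ) =
        harmonicInterp (m : ℕ) + 1 / ((m : ℝ) + 1) := by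
      rw [harmonicInterp_nat, harmonicInterp_nat, Finset.sum_range_succ]
    by_cases hcase : (m : ℝ) ≤ x
    · rcases eq_or_lt_of_le hxm with heq | hlt
      · rw [heq]
        push_cast
        simp
      · have hfloor : ⌊x⌋₊ = m := by
          rw [Nat.floor_eq_iff hx]
          constructor
          · exact hcase
          · push_cast at hlt ⊢; linarith
        rw [harmonicInterp, hfloor, hstep, harmonicInterp_nat]
        have hm1 : (0 : ℝ) < (m : ℝ) + 1 := by positivity
        push_cast
        apply le_of_eq
        field_simp
        ring
      -- done
    · push_neg at hcase
      have hm0 : 1 ≤ m := by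
        by_contra h
        have : m = 0 := by omega
        subst this
        simp at hcase
        linarith
      have hmR : (0 : ℝ) < m := by exact_mod_cast hm0
      have h1 := ih x hx (le_of_lt hcase)
      rw [hstep]
      push_cast
      have h2 : ((m : ℝ) + 1 - x) / ((m : ℝ) + 1) ≤
          ((m : ℝ) - x) / m + 1 / ((m : ℝ) + 1) := by
        rw [div_add_div _ _ (ne_of_gt hmR) (by positivity), div_le_div_iff₀ (by positivity) (by positivity)]
        nlinarith [le_of_lt hcase, hx]
      linarith

theorem stmt_3 (n : ℕ) (hn : 1 ≤ n) (a : ℝ) (ha1 : 1 ≤ a) (han : a ≤ n) :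
    a / n + harmonicInterp (n - a) ≤ harmonicInterp n ∧
    (a / n + harmonicInterp (n - a) = harmonicInterp n ↔ a = 1) := by
  obtain ⟨m, rfl⟩ : ∃ m, n = m + 1 := ⟨n - 1, by omega⟩
  have hstep : harmonicInterp ((m + 1 : ℕ) : ℝ) =
      harmonicInterp (m : ℕ) + 1 / ((m : ℝ) + 1) := by
    rw [harmonicInterp_nat, harmonicInterp_nat, Finset.sum_range_succ]
  rcases eq_or_lt_of_le ha1 with heq | hlt
  · subst heq
    have : (1 : ℝ) / ((m + 1 : ℕ) : ℝ) + harmonicInterp (((m + 1 : ℕ) : ℝ) - 1) =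
        harmonicInterp ((m + 1 : ℕ) : ℝ) := by
      have hcast : (((m + 1 : ℕ) : ℝ)) - 1 = ((m : ℕ) : ℝ) := by push_cast; ring
      rw [hcast, hstep]
      push_cast
      ring
    constructor
    · exact le_of_eq this
    · exact ⟨fun _ => rfl, fun _ => this⟩
  · -- a > 1, strict inequality
    have haR : a ≤ (m : ℝ) + 1 := by exact_mod_cast han
    have hm1 : 1 ≤ m := by
      by_contra h
      have hm0 : m = 0 := by omega
      rw [hm0] at haR
      push_cast at haR
      linarith
    have hmR : (1 : ℝ) ≤ m := by exact_mod_cast hm1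
    have hxnonneg : 0 ≤ ((m + 1 : ℕ) : ℝ) - a := by
      push_cast
      linarith
    have hxle : ((m + 1 : ℕ) : ℝ) - a ≤ (m : ℕ) := by push_cast; linarith
    have hkey := harmonicInterp_key m (((m + 1 : ℕ) : ℝ) - a) hxnonneg hxle
    have hstrict : a / ((m + 1 : ℕ) : ℝ) + harmonicInterp (((m + 1 : ℕ) : ℝ) - a) <
        harmonicInterp ((m + 1 : ℕ) : ℝ) := by
      rw [hstep]
      push_cast at hkey ⊢
      have hfrac : (a - 1) / ((m : ℝ) + 1) < (a - 1) / m := by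
        apply div_lt_div_of_pos_left (by linarith) (by linarith) (by linarith)
      have e1 : ((m : ℝ) - ((m : ℝ) + 1 - a)) / m = (a - 1) / m := by ring_nf
      rw [e1] at hkey
      have e2 : a / ((m : ℝ) + 1) = (a - 1) / ((m : ℝ) + 1) + 1 / ((m : ℝ) + 1) := by
        field_simp
        ring
      linarith [e2, hfrac]
    exact ⟨le_of_lt hstrict, ⟨fun h => absurd h (ne_of_lt hstrict),
      fun h => absurd h (by linarith)⟩⟩
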